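/- If f : ℝ^n → ℝ is convex, differentiable, and its gradient is μ-Lipschitz, then its Fenchel conjugate f* is (1/μ)-strongly convex; in particular, for any points z, y with nonempty subdifferentials of f* and any g_z ∈ ∂f*(z), g_y ∈ ∂f*(y), setting Δ = y − z, one has ⟨g_z − g_y, Δ⟩ + (1/μ)‖Δ‖₂² ≤ 0. -/

import Mathlib

open Matrix Finset Real Set

noncomputable section

namespace Sketch

/-- The ℓ2 norm of a vector in `Fin k → ℝ`. -/
def norm2 {k : ℕ} (x : Fin k → ℝ) : ℝ := Real.sqrt (∑ i, x i ^ 2)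

/-- The continuous linear functional `v ↦ ⟨w, v⟩`; used to state that a function has
gradient `w` at a point. -/
def dotCLM {k : ℕ} (w : Fin k → ℝ) : (Fin k → ℝ) →L[ℝ] ℝ :=
  LinearMap.toContinuousLinearMap
    { toFun := fun v => w ⬝ᵥ v
      map_add' := fun a b => dotProduct_add w a b
      map_smul' := fun c a => by
        simp [dotProduct, Finset.mul_sum, mul_left_comm] }

/-- The domain of the Fenchel conjugate `f*`. -/
def fenchelDom {k : ℕ} (f : (Fin k → ℝ) → ℝ) : Set (Fin k → ℝ) :=
  {z | BddAbove (Set.range fun w => w ⬝ᵥ z - f w)}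

/-- The Fenchel conjugate `f*(z) = sup_w (⟨w, z⟩ - f(w))` (as a real-valued supremum,
meaningful on `fenchelDom f`). -/
def fenchel {k : ℕ} (f : (Fin k → ℝ) → ℝ) (z : Fin k → ℝ) : ℝ :=
  ⨆ w, (w ⬝ᵥ z - f w)

/-- The subdifferential of the Fenchel conjugate `f*` at `z`. -/
def fenchelSubdiff {k : ℕ} (f : (Fin k → ℝ) → ℝ) (z : Fin k → ℝ) : Set (Fin k → ℝ) :=
  {g | ∀ y ∈ fenchelDom f, fenchel f z + g ⬝ᵥ (y - z) ≤ fenchel f y}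

/-- `P` is the orthogonal projector onto the range (column space) of `S`. -/
def IsOrthProj {q m : ℕ} (S : Matrix (Fin q) (Fin m) ℝ) (P : Matrix (Fin q) (Fin q) ℝ) : Prop :=
  Pᵀ = P ∧ P * P = P ∧ P * S = S ∧ ∃ C : Matrix (Fin m) (Fin q) ℝ, P = S * C

/-- The quantity `Z_f`: the supremum of `(Δᵀ B P⊥ Bᵀ Δ)^{1/2} / ‖Δ‖₂` over nonzero
`Δ ∈ dom f* - z*`. -/
def Zf {k q : ℕ} (f : (Fin k → ℝ) → ℝ) (B : Matrix (Fin k) (Fin q) ℝ)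
    (Pperp : Matrix (Fin q) (Fin q) ℝ) (zs : Fin k → ℝ) : ℝ :=
  sSup {r | ∃ Δ : Fin k → ℝ, Δ ≠ 0 ∧ zs + Δ ∈ fenchelDom f ∧
    r = Real.sqrt (Δ ⬝ᵥ (B * Pperp * Bᵀ).mulVec Δ) / norm2 Δ}

/-- The spectral norm (largest singular value) of a matrix. -/
def specNorm {a b : ℕ} (M : Matrix (Fin a) (Fin b) ℝ) : ℝ :=
  sSup {r | ∃ v : Fin b → ℝ, norm2 v = 1 ∧ r = norm2 (M.mulVec v)}

/-- The eigenvalues of `A * Aᵀ` (i.e. the squared singular values of `A`),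
sorted in decreasing order. -/
def eigsDesc {n d : ℕ} (A : Matrix (Fin n) (Fin d) ℝ) : Fin n → ℝ := fun i =>
  ((Matrix.isHermitian_mul_conjTranspose_self A).eigenvalues ∘
    Tuple.sort (Matrix.isHermitian_mul_conjTranspose_self A).eigenvalues) i.rev

/-- The spectral tail `R_k(A) = (σ_k² + (1/k) ∑_{j=k+1}^ρ σ_j²)^{1/2}`. -/
def Rk {n d : ℕ} (A : Matrix (Fin n) (Fin d) ℝ) (k : ℕ) : ℝ :=
  Real.sqrt ((∑ j : Fin n, if (j : ℕ) + 1 = k then eigsDesc A j else 0)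
    + (1 / (k : ℝ)) * ∑ j : Fin n, if k ≤ (j : ℕ) then eigsDesc A j else 0)

/-- Product measure on `n × m` matrices with i.i.d. standard Gaussian entries. -/
def gaussMatrix (n m : ℕ) : MeasureTheory.Measure (Fin n → Fin m → ℝ) :=
  MeasureTheory.Measure.pi fun _ => MeasureTheory.Measure.pi fun _ =>
    ProbabilityTheory.gaussianReal 0 1


/-- The largest eigenvalue (Rayleigh quotient supremum) of a symmetric matrix. -/
def eigMax {q : ℕ} (M : Matrix (Fin q) (Fin q) ℝ) : ℝ :=
  sSup {r | ∃ v : Fin q → ℝ, norm2 v = 1 ∧ r = v ⬝ᵥ M.mulVec v}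

/-- The smallest eigenvalue (Rayleigh quotient infimum) of a symmetric matrix. -/
def eigMin {q : ℕ} (M : Matrix (Fin q) (Fin q) ℝ) : ℝ :=
  sInf {r | ∃ v : Fin q → ℝ, norm2 v = 1 ∧ r = v ⬝ᵥ M.mulVec v}


lemma norm2_nonneg' {k : ℕ} (x : Fin k → ℝ) : 0 ≤ norm2 x := Real.sqrt_nonneg _

lemma norm2_sq' {k : ℕ} (x : Fin k → ℝ) : norm2 x ^ 2 = ∑ i, x i ^ 2 := by
  rw [norm2, Real.sq_sqrt]
  exact Finset.sum_nonneg fun i _ => sq_nonneg _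

lemma norm2_smul' {k : ℕ} (t : ℝ) (x : Fin k → ℝ) : norm2 (t • x) = |t| * norm2 x := by
  rw [norm2, norm2, ← Real.sqrt_sq_eq_abs, ← Real.sqrt_mul (sq_nonneg t), Finset.mul_sum]
  congr 1
  exact Finset.sum_congr rfl fun i _ => by simp [Pi.smul_apply, smul_eq_mul, mul_pow]

lemma norm2_neg' {k : ℕ} (x : Fin k → ℝ) : norm2 (-x) = norm2 x := by
  have : (-x) = (-1 : ℝ) • x := by ext i; simp
  rw [this, norm2_smul']; simp

lemma cs' {k : ℕ} (a b : Fin k → ℝ) : a ⬝ᵥ b ≤ norm2 a * norm2 b := by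
  have h := sum_mul_sq_le_sq_mul_sq Finset.univ a b
  have h2 : norm2 a * norm2 b = Real.sqrt ((∑ i, a i ^ 2) * ∑ i, b i ^ 2) := by
    rw [norm2, norm2, Real.sqrt_mul (Finset.sum_nonneg fun i _ => sq_nonneg _)]
  rw [h2]
  calc a ⬝ᵥ b ≤ |a ⬝ᵥ b| := le_abs_self _
    _ = Real.sqrt ((a ⬝ᵥ b) ^ 2) := (Real.sqrt_sq_eq_abs _).symm
    _ ≤ _ := Real.sqrt_le_sqrt h

lemma dot_self_eq {k : ℕ} (a : Fin k → ℝ) : a ⬝ᵥ a = norm2 a ^ 2 := by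
  rw [norm2_sq', dotProduct]
  exact Finset.sum_congr rfl fun i _ => (sq (a i)).symm

/-- descent lemma -/
lemma descent {n : ℕ} (f : (Fin n → ℝ) → ℝ) (f' : (Fin n → ℝ) → Fin n → ℝ)
    (μ : ℝ) (hμ : 0 < μ)
    (hdiff : ∀ w, HasFDerivAt f (dotCLM (f' w)) w)
    (hsmooth : ∀ w v, norm2 (f' w - f' v) ≤ μ * norm2 (w - v))
    (w u : Fin n → ℝ) :
    f u ≤ f w + f' w ⬝ᵥ (u - w) + μ / 2 * norm2 (u - w) ^ 2 := by
  set v := u - w with hv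
  have hderiv : ∀ t : ℝ, HasDerivAt (fun t : ℝ => f (w + t • v)) (f' (w + t • v) ⬝ᵥ v) t := by
    intro t
    have hL : HasDerivAt (fun t : ℝ => w + t • v) v t := by
      simpa using ((hasDerivAt_id t).smul_const v).const_add w
    have := (hdiff (w + t • v)).comp_hasDerivAt t hL
    simp [dotCLM] at this; exact this
  set φ : ℝ → ℝ := fun t =>
    f w + t * (f' w ⬝ᵥ v) + μ / 2 * t ^ 2 * norm2 v ^ 2 - f (w + t • v) with hφ
  have hφderiv : ∀ t : ℝ, HasDerivAt φ
      (f' w ⬝ᵥ v + μ * t * norm2 v ^ 2 - f' (w + t • v) ⬝ᵥ v) t := by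
    intro t
    have h1 : HasDerivAt (fun t : ℝ => f w + t * (f' w ⬝ᵥ v) + μ / 2 * t ^ 2 * norm2 v ^ 2)
        (f' w ⬝ᵥ v + μ * t * norm2 v ^ 2) t := by
      have ha : HasDerivAt (fun t : ℝ => t * (f' w ⬝ᵥ v)) (f' w ⬝ᵥ v) t := by
        simpa using (hasDerivAt_id t).mul_const (f' w ⬝ᵥ v)
      have hb : HasDerivAt (fun t : ℝ => μ / 2 * t ^ 2 * norm2 v ^ 2)
          (μ * t * norm2 v ^ 2) t := by
        have : HasDerivAt (fun t : ℝ => t ^ 2) (2 * t) t := by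
          simpa using hasDerivAt_pow 2 t
        have := ((this.const_mul (μ / 2)).mul_const (norm2 v ^ 2))
        have e : μ * t * norm2 v ^ 2 = μ / 2 * (2 * t) * norm2 v ^ 2 := by ring
        rw [e]; exact this
      have := ((ha.const_add (f w)).add hb); exact this
    exact h1.sub (hderiv t)
  have hmono : MonotoneOn φ (Set.Icc (0:ℝ) 1) := by
    apply monotoneOn_of_deriv_nonneg (convex_Icc 0 1)
    · exact fun t _ => ((hφderiv t).continuousAt).continuousWithinAt
    · exact fun t _ => ((hφderiv t).differentiableAt).differentiableWithinAt
    · intro t ht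
      rw [interior_Icc] at ht
      rw [(hφderiv t).deriv]
      have hdot : (f' (w + t • v) - f' w) ⬝ᵥ v ≤ μ * t * norm2 v ^ 2 := by
        calc (f' (w + t • v) - f' w) ⬝ᵥ v ≤ norm2 (f' (w + t • v) - f' w) * norm2 v := cs' _ _
          _ ≤ (μ * norm2 ((w + t • v) - w)) * norm2 v := by
              apply mul_le_mul_of_nonneg_right _ (norm2_nonneg' v)
              exact hsmooth _ _
          _ = μ * t * norm2 v ^ 2 := by
              have : (w + t • v) - w = t • v := by ext i; simp
              rw [this, norm2_smul', abs_of_pos ht.1]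
              ring
      have heq : (f' (w + t • v) - f' w) ⬝ᵥ v = f' (w + t • v) ⬝ᵥ v - f' w ⬝ᵥ v :=
        sub_dotProduct _ _ _
      linarith [heq ▸ hdot]
  have h01 := hmono (Set.mem_Icc.2 ⟨le_refl 0, zero_le_one⟩)
    (Set.mem_Icc.2 ⟨zero_le_one, le_refl 1⟩) zero_le_one
  have hφ0 : φ 0 = 0 := by simp [hφ]
  have hφ1 : φ 1 = f w + f' w ⬝ᵥ v + μ / 2 * norm2 v ^ 2 - f u := by
    simp [hφ, hv]
  rw [hφ0, hφ1] at h01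
  linarith

/-- key lower bound on fenchel -/
lemma fenchel_lb {n : ℕ} (f : (Fin n → ℝ) → ℝ) (f' : (Fin n → ℝ) → Fin n → ℝ)
    (μ : ℝ) (hμ : 0 < μ)
    (hdiff : ∀ w, HasFDerivAt f (dotCLM (f' w)) w)
    (hsmooth : ∀ w v, norm2 (f' w - f' v) ≤ μ * norm2 (w - v))
    {z : Fin n → ℝ} (hz : z ∈ fenchelDom f) (w : Fin n → ℝ) :
    w ⬝ᵥ z - f w + 1 / (2 * μ) * norm2 (z - f' w) ^ 2 ≤ fenchel f z := by
  set d := z - f' w with hd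
  set u := w + (1 / μ) • d with hu
  have hle : u ⬝ᵥ z - f u ≤ fenchel f z := le_ciSup hz u
  have hdesc := descent f f' μ hμ hdiff hsmooth w u
  have huw : u - w = (1 / μ) • d := by ext i; simp [hu]
  have h1 : f' w ⬝ᵥ (u - w) = (1 / μ) * (f' w ⬝ᵥ d) := by
    rw [huw]; exact dotProduct_smul _ _ _
  have h2 : norm2 (u - w) ^ 2 = (1 / μ) ^ 2 * norm2 d ^ 2 := by
    rw [huw, norm2_smul', mul_pow, sq_abs]
  have h3 : u ⬝ᵥ z = w ⬝ᵥ z + (1 / μ) * (d ⬝ᵥ z) := by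
    rw [hu, add_dotProduct, smul_dotProduct]; simp
  have h4 : d ⬝ᵥ z - f' w ⬝ᵥ d = norm2 d ^ 2 := by
    have hcomm : f' w ⬝ᵥ d = d ⬝ᵥ f' w := dotProduct_comm _ _
    rw [hcomm, ← dotProduct_sub, ← hd, dot_self_eq]
  have hμ' : μ ≠ 0 := ne_of_gt hμ
  have : w ⬝ᵥ z - f w + 1 / (2 * μ) * norm2 d ^ 2 ≤ u ⬝ᵥ z - f u := by
    rw [h3]
    have expand : w ⬝ᵥ z + 1 / μ * (d ⬝ᵥ z) - (f w + f' w ⬝ᵥ (u - w) + μ / 2 * norm2 (u - w) ^ 2)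
        = w ⬝ᵥ z - f w + 1 / (2 * μ) * norm2 d ^ 2 := by
      have hdz : d ⬝ᵥ z = norm2 d ^ 2 + f' w ⬝ᵥ d := by linarith [h4]
      rw [h1, h2, hdz]
      field_simp
      ring
    linarith [hdesc]
  linarith

/-- strong convexity of the conjugate: pointwise bound -/
lemma combo_bound {n : ℕ} (f : (Fin n → ℝ) → ℝ) (f' : (Fin n → ℝ) → Fin n → ℝ)
    (μ : ℝ) (hμ : 0 < μ)
    (hdiff : ∀ w, HasFDerivAt f (dotCLM (f' w)) w)
    (hsmooth : ∀ w v, norm2 (f' w - f' v) ≤ μ * norm2 (w - v))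
    {z₁ z₂ : Fin n → ℝ} (h₁ : z₁ ∈ fenchelDom f) (h₂ : z₂ ∈ fenchelDom f)
    {a b : ℝ} (ha : 0 ≤ a) (hb : 0 ≤ b) (hab : a + b = 1) (w : Fin n → ℝ) :
    w ⬝ᵥ (a • z₁ + b • z₂) - f w ≤
      a * fenchel f z₁ + b * fenchel f z₂ - a * b / (2 * μ) * norm2 (z₁ - z₂) ^ 2 := by
  have A1 := fenchel_lb f f' μ hμ hdiff hsmooth h₁ w
  have A2 := fenchel_lb f f' μ hμ hdiff hsmooth h₂ w
  set g := f' w with hg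
  have hdot : w ⬝ᵥ (a • z₁ + b • z₂) = a * (w ⬝ᵥ z₁) + b * (w ⬝ᵥ z₂) := by
    rw [dotProduct_add, dotProduct_smul, dotProduct_smul]; simp
  -- parallelogram-type identity
  have hpar : a * norm2 (z₁ - g) ^ 2 + b * norm2 (z₂ - g) ^ 2
      = a * b * norm2 (z₁ - z₂) ^ 2 + norm2 (a • (z₁ - g) + b • (z₂ - g)) ^ 2 := by
    simp only [norm2_sq', Finset.mul_sum, ← Finset.sum_add_distrib]
    apply Finset.sum_congr rfl
    intro i _
    have h12 : (z₁ - z₂) i = (z₁ - g) i - (z₂ - g) i := by simp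
    simp only [Pi.add_apply, Pi.smul_apply, smul_eq_mul, h12]
    have hba : b = 1 - a := by linarith
    subst hba
    ring
  have hq : 0 ≤ norm2 (a • (z₁ - g) + b • (z₂ - g)) ^ 2 := sq_nonneg _
  have key : a * b * norm2 (z₁ - z₂) ^ 2 ≤ a * norm2 (z₁ - g) ^ 2 + b * norm2 (z₂ - g) ^ 2 := by
    linarith
  have hc : 0 < 1 / (2 * μ) := by positivity
  rw [hdot]
  have := add_le_add (mul_le_mul_of_nonneg_left A1 ha) (mul_le_mul_of_nonneg_left A2 hb)
  have hexp : a * (w ⬝ᵥ z₁ - f w + 1 / (2 * μ) * norm2 (z₁ - g) ^ 2)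
      + b * (w ⬝ᵥ z₂ - f w + 1 / (2 * μ) * norm2 (z₂ - g) ^ 2)
      = a * (w ⬝ᵥ z₁) + b * (w ⬝ᵥ z₂) - f w
        + 1 / (2 * μ) * (a * norm2 (z₁ - g) ^ 2 + b * norm2 (z₂ - g) ^ 2) := by
    have hba : b = 1 - a := by linarith
    subst hba; ring
  have hfinal : a * (w ⬝ᵥ z₁) + b * (w ⬝ᵥ z₂) - f w
      + 1 / (2 * μ) * (a * b * norm2 (z₁ - z₂) ^ 2)
      ≤ a * fenchel f z₁ + b * fenchel f z₂ := by
    calc a * (w ⬝ᵥ z₁) + b * (w ⬝ᵥ z₂) - f w + 1 / (2 * μ) * (a * b * norm2 (z₁ - z₂) ^ 2)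
        ≤ a * (w ⬝ᵥ z₁) + b * (w ⬝ᵥ z₂) - f w
          + 1 / (2 * μ) * (a * norm2 (z₁ - g) ^ 2 + b * norm2 (z₂ - g) ^ 2) := by
          have := mul_le_mul_of_nonneg_left key (le_of_lt hc)
          linarith
      _ = a * (w ⬝ᵥ z₁ - f w + 1 / (2 * μ) * norm2 (z₁ - g) ^ 2)
          + b * (w ⬝ᵥ z₂ - f w + 1 / (2 * μ) * norm2 (z₂ - g) ^ 2) := hexp.symm
      _ ≤ a * fenchel f z₁ + b * fenchel f z₂ := this
  have harr : a * b / (2 * μ) * norm2 (z₁ - z₂) ^ 2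
      = 1 / (2 * μ) * (a * b * norm2 (z₁ - z₂) ^ 2) := by ring
  linarith [harr ▸ hfinal]

lemma combo_mem {n : ℕ} (f : (Fin n → ℝ) → ℝ) (f' : (Fin n → ℝ) → Fin n → ℝ)
    (μ : ℝ) (hμ : 0 < μ)
    (hdiff : ∀ w, HasFDerivAt f (dotCLM (f' w)) w)
    (hsmooth : ∀ w v, norm2 (f' w - f' v) ≤ μ * norm2 (w - v))
    {z₁ z₂ : Fin n → ℝ} (h₁ : z₁ ∈ fenchelDom f) (h₂ : z₂ ∈ fenchelDom f)
    {a b : ℝ} (ha : 0 ≤ a) (hb : 0 ≤ b) (hab : a + b = 1) :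
    a • z₁ + b • z₂ ∈ fenchelDom f := by
  refine ⟨a * fenchel f z₁ + b * fenchel f z₂ - a * b / (2 * μ) * norm2 (z₁ - z₂) ^ 2, ?_⟩
  rintro x ⟨w, rfl⟩
  exact combo_bound f f' μ hμ hdiff hsmooth h₁ h₂ ha hb hab w

lemma fenchel_combo_le {n : ℕ} (f : (Fin n → ℝ) → ℝ) (f' : (Fin n → ℝ) → Fin n → ℝ)
    (μ : ℝ) (hμ : 0 < μ)
    (hdiff : ∀ w, HasFDerivAt f (dotCLM (f' w)) w)
    (hsmooth : ∀ w v, norm2 (f' w - f' v) ≤ μ * norm2 (w - v))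
    {z₁ z₂ : Fin n → ℝ} (h₁ : z₁ ∈ fenchelDom f) (h₂ : z₂ ∈ fenchelDom f)
    {a b : ℝ} (ha : 0 ≤ a) (hb : 0 ≤ b) (hab : a + b = 1) :
    fenchel f (a • z₁ + b • z₂) ≤
      a * fenchel f z₁ + b * fenchel f z₂ - a * b / (2 * μ) * norm2 (z₁ - z₂) ^ 2 :=
  ciSup_le fun w => combo_bound f f' μ hμ hdiff hsmooth h₁ h₂ ha hb hab w

/-- if `f` is convex, differentiable with `μ`-Lipschitz gradient, then
its Fenchel conjugate is `(1/μ)`-strongly convex (i.e. `f* - (1/(2μ))‖·‖₂²` is convex on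
`dom f*`), and for points `z, y ∈ dom f*` with subgradients `gz ∈ ∂f*(z)`, `gy ∈ ∂f*(y)`
and `Δ = y - z`, one has `⟨gz - gy, Δ⟩ + (1/μ)‖Δ‖₂² ≤ 0`. -/
theorem statement_5 {n : ℕ} (f : (Fin n → ℝ) → ℝ) (f' : (Fin n → ℝ) → Fin n → ℝ)
    (μ : ℝ) (hμ : 0 < μ)
    (hconv : ConvexOn ℝ Set.univ f)
    (hdiff : ∀ w, HasFDerivAt f (dotCLM (f' w)) w)
    (hsmooth : ∀ w v, norm2 (f' w - f' v) ≤ μ * norm2 (w - v)) :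
    ConvexOn ℝ (fenchelDom f) (fun z => fenchel f z - 1 / (2 * μ) * norm2 z ^ 2) ∧
    ∀ z y : Fin n → ℝ, z ∈ fenchelDom f → y ∈ fenchelDom f →
      ∀ gz ∈ fenchelSubdiff f z, ∀ gy ∈ fenchelSubdiff f y,
        (gz - gy) ⬝ᵥ (y - z) + 1 / μ * norm2 (y - z) ^ 2 ≤ 0 := by
  constructor
  · constructor
    · intro z₁ h₁ z₂ h₂ a b ha hb hab
      exact combo_mem f f' μ hμ hdiff hsmooth h₁ h₂ ha hb hab
    · intro z₁ h₁ z₂ h₂ a b ha hb hab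
      have hF := fenchel_combo_le f f' μ hμ hdiff hsmooth h₁ h₂ ha hb hab
      -- norm2 identity: a‖z₁‖² + b‖z₂‖² = a b ‖z₁-z₂‖² + ‖a z₁ + b z₂‖²
      have hpar : a * norm2 z₁ ^ 2 + b * norm2 z₂ ^ 2
          = a * b * norm2 (z₁ - z₂) ^ 2 + norm2 (a • z₁ + b • z₂) ^ 2 := by
        simp only [norm2_sq', Finset.mul_sum, ← Finset.sum_add_distrib]
        apply Finset.sum_congr rfl
        intro i _
        simp only [Pi.add_apply, Pi.sub_apply, Pi.smul_apply, smul_eq_mul]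
        have hba : b = 1 - a := by linarith
        subst hba; ring
      simp only [smul_eq_mul]
      have hc : (0:ℝ) ≤ 1 / (2 * μ) := by positivity
      have : 1 / (2 * μ) * (a * norm2 z₁ ^ 2 + b * norm2 z₂ ^ 2)
          = 1 / (2 * μ) * (a * b * norm2 (z₁ - z₂) ^ 2)
            + 1 / (2 * μ) * norm2 (a • z₁ + b • z₂) ^ 2 := by rw [hpar]; ring
      have harr : a * b / (2 * μ) * norm2 (z₁ - z₂) ^ 2
          = 1 / (2 * μ) * (a * b * norm2 (z₁ - z₂) ^ 2) := by ring
      nlinarith [hF]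
  · intro z y hz hy gz hgz gy hgy
    set Δ := y - z with hΔ
    set B := norm2 Δ ^ 2 with hB
    have hB0 : 0 ≤ B := sq_nonneg _
    set c := 1 / (2 * μ) with hc
    have hc0 : 0 < c := by positivity
    -- For t ∈ (0,1]: gz ⬝ᵥ Δ ≤ fenchel f y - fenchel f z - (1-t) c B
    have hkey : ∀ t : ℝ, 0 < t → t ≤ 1 →
        gz ⬝ᵥ Δ ≤ fenchel f y - fenchel f z - (1 - t) * c * B := by
      intro t ht0 ht1
      have ha : (0:ℝ) ≤ t := le_of_lt ht0
      have hb : (0:ℝ) ≤ 1 - t := by linarith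
      have hab : t + (1 - t) = 1 := by ring
      have hmem := combo_mem f f' μ hμ hdiff hsmooth hy hz ha hb hab
      have hFle := fenchel_combo_le f f' μ hμ hdiff hsmooth hy hz ha hb hab
      have hsub := hgz _ hmem
      have hdiff1 : (t • y + (1 - t) • z) - z = t • Δ := by
        ext i; simp [hΔ]; ring
      have hdot : gz ⬝ᵥ ((t • y + (1 - t) • z) - z) = t * (gz ⬝ᵥ Δ) := by
        rw [hdiff1, dotProduct_smul]; simp
      rw [hdot] at hsub
      have hnyz : norm2 (y - z) = norm2 Δ := rfl
      have hcomb : fenchel f z + t * (gz ⬝ᵥ Δ) ≤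
          t * fenchel f y + (1 - t) * fenchel f z - t * (1 - t) / (2 * μ) * B := by
        calc fenchel f z + t * (gz ⬝ᵥ Δ) ≤ fenchel f (t • y + (1 - t) • z) := hsub
          _ ≤ t * fenchel f y + (1 - t) * fenchel f z - t * (1 - t) / (2 * μ) * norm2 (y - z) ^ 2 := hFle
          _ = t * fenchel f y + (1 - t) * fenchel f z - t * (1 - t) / (2 * μ) * B := by rw [hB, hnyz]
      have ht' : t * (gz ⬝ᵥ Δ) ≤ t * (fenchel f y - fenchel f z - (1 - t) * c * B) := by
        have : t * (1 - t) / (2 * μ) * B = t * ((1 - t) * c * B) := by rw [hc]; ring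
        rw [this] at hcomb
        nlinarith [hcomb]
      exact le_of_mul_le_mul_left (by linarith [ht']) ht0
    have hgzΔ : gz ⬝ᵥ Δ ≤ fenchel f y - fenchel f z - c * B := by
      have : gz ⬝ᵥ Δ + c * B ≤ (fenchel f y - fenchel f z) := by
        apply le_of_forall_pos_le_add
        intro ε hε
        set t := min (1/2 : ℝ) (ε / (c * B + 1)) with htdef
        have hcB1 : (0:ℝ) < c * B + 1 := by nlinarith
        have ht0 : 0 < t := lt_min (by norm_num) (div_pos hε hcB1)
        have ht1 : t ≤ 1 := le_trans (min_le_left _ _) (by norm_num)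
        have h := hkey t ht0 ht1
        have htcB : t * (c * B) ≤ ε := by
          have h1 : t ≤ ε / (c * B + 1) := min_le_right _ _
          have h2 : t * (c * B) ≤ (ε / (c * B + 1)) * (c * B) := by
            apply mul_le_mul_of_nonneg_right h1 (by positivity)
          have h3 : (ε / (c * B + 1)) * (c * B) ≤ ε := by
            rw [div_mul_eq_mul_div, div_le_iff₀ hcB1]
            nlinarith
          linarith
        nlinarith [h]
      linarith
    -- Similarly for gy with roles of z and y swapped
    have hkey2 : ∀ t : ℝ, 0 < t → t ≤ 1 →
        gy ⬝ᵥ (z - y) ≤ fenchel f z - fenchel f y - (1 - t) * c * B := by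
      intro t ht0 ht1
      have ha : (0:ℝ) ≤ t := le_of_lt ht0
      have hb : (0:ℝ) ≤ 1 - t := by linarith
      have hab : t + (1 - t) = 1 := by ring
      have hmem := combo_mem f f' μ hμ hdiff hsmooth hz hy ha hb hab
      have hFle := fenchel_combo_le f f' μ hμ hdiff hsmooth hz hy ha hb hab
      have hsub := hgy _ hmem
      have hdiff1 : (t • z + (1 - t) • y) - y = t • (z - y) := by
        ext i; simp; ring
      have hdot : gy ⬝ᵥ ((t • z + (1 - t) • y) - y) = t * (gy ⬝ᵥ (z - y)) := by
        rw [hdiff1, dotProduct_smul]; simp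
      rw [hdot] at hsub
      have hnzy : norm2 (z - y) = norm2 Δ := by
        have : z - y = -Δ := by ext i; simp [hΔ]
        rw [this, norm2_neg']
      have hcomb : fenchel f y + t * (gy ⬝ᵥ (z - y)) ≤
          t * fenchel f z + (1 - t) * fenchel f y - t * (1 - t) / (2 * μ) * B := by
        calc fenchel f y + t * (gy ⬝ᵥ (z - y)) ≤ fenchel f (t • z + (1 - t) • y) := hsub
          _ ≤ t * fenchel f z + (1 - t) * fenchel f y - t * (1 - t) / (2 * μ) * norm2 (z - y) ^ 2 := hFle
          _ = t * fenchel f z + (1 - t) * fenchel f y - t * (1 - t) / (2 * μ) * B := by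
              rw [hB, hnzy]
      have ht' : t * (gy ⬝ᵥ (z - y)) ≤ t * (fenchel f z - fenchel f y - (1 - t) * c * B) := by
        have : t * (1 - t) / (2 * μ) * B = t * ((1 - t) * c * B) := by rw [hc]; ring
        rw [this] at hcomb
        nlinarith [hcomb]
      exact le_of_mul_le_mul_left (by linarith [ht']) ht0
    have hgyΔ : gy ⬝ᵥ (z - y) ≤ fenchel f z - fenchel f y - c * B := by
      have : gy ⬝ᵥ (z - y) + c * B ≤ (fenchel f z - fenchel f y) := by
        apply le_of_forall_pos_le_add
        intro ε hε
        set t := min (1/2 : ℝ) (ε / (c * B + 1)) with htdef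
        have hcB1 : (0:ℝ) < c * B + 1 := by nlinarith
        have ht0 : 0 < t := lt_min (by norm_num) (div_pos hε hcB1)
        have ht1 : t ≤ 1 :=  le_trans (min_le_left _ _) (by norm_num)
        have h := hkey2 t ht0 ht1
        have htcB : t * (c * B) ≤ ε := by
          have h1 : t ≤ ε / (c * B + 1) := min_le_right _ _
          have h2 : t * (c * B) ≤ (ε / (c * B + 1)) * (c * B) := by
            apply mul_le_mul_of_nonneg_right h1 (by positivity)
          have h3 : (ε / (c * B + 1)) * (c * B) ≤ ε := by
            rw [div_mul_eq_mul_div, div_le_iff₀ hcB1]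
            nlinarith
          linarith
        nlinarith [h]
      linarith
    have hsplit : (gz - gy) ⬝ᵥ Δ = gz ⬝ᵥ Δ + gy ⬝ᵥ (z - y) := by
      rw [sub_dotProduct]
      have : gy ⬝ᵥ (z - y) = - (gy ⬝ᵥ Δ) := by
        have hzy : z - y = -Δ := by ext i; simp [hΔ]
        rw [hzy]
        have : (-Δ) = (-1 : ℝ) • Δ := by ext i; simp
        rw [this, dotProduct_smul]; simp
      rw [this]; ring
    have h2cB : 2 * (c * B) = 1 / μ * B := by rw [hc]; field_simp
    have : (gz - gy) ⬝ᵥ Δ ≤ - (2 * (c * B)) := by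
      rw [hsplit]; linarith
    rw [h2cB] at this
    linarith

end Sketch
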